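/- Let (V,q) be a nondegenerate quadratic space and τ an isometry. The Wall form ω_τ on R(τ), defined by ω_τ(τ(x)-x, τ(y)-y) = b_q(τ(x)-x, y), is a well-defined bilinear form; that is, if τ(x)-x = τ(x')-x' and τ(y)-y = τ(y')-y' then b_q(τ(x)-x, y) = b_q(τ(x')-x', y'). -/
import Mathlib


theorem wall_stmt2 {F V : Type*} [Field F] [AddCommGroup V] [Module F V]
    [FiniteDimensional F V] (q : QuadraticForm F V)
    (hq : LinearMap.BilinForm.Nondegenerate (QuadraticMap.polarBilin q))
    (τ : V →ₗ[F] V) (hτ : ∀ x, q (τ x) = q x)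
    (x x' y y' : V) (hx : τ x - x = τ x' - x') (hy : τ y - y = τ y' - y') :
    QuadraticMap.polarBilin q (τ x - x) y = QuadraticMap.polarBilin q (τ x' - x') y' := by
  rw [hx]
  -- τ fixes z := y - y'
  have hz : τ (y - y') = y - y' := by
    rw [map_sub, sub_eq_sub_iff_sub_eq_sub]
    exact hy
  -- τ preserves the polar form
  have hb : ∀ a b : V, QuadraticMap.polarBilin q (τ a) (τ b) = QuadraticMap.polarBilin q a b := by
    intro a b
    simp [QuadraticMap.polarBilin, QuadraticMap.polar, ← map_add, hτ]
  have key : QuadraticMap.polarBilin q (τ x' - x') (y - y') = 0 := by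
    have h1 : QuadraticMap.polarBilin q (τ x') (y - y') = QuadraticMap.polarBilin q x' (y - y') := by
      conv_lhs => rw [← hz]
      exact hb x' (y - y')
    rw [map_sub (QuadraticMap.polarBilin q) (τ x') x', LinearMap.sub_apply, h1, sub_self]
  have := key
  rw [map_sub] at this
  exact sub_eq_zero.mp this
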